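/- Let b > 0 and let Ψ : ℝ × ℝ → ℝ be continuous on [−b,b] × [−1,1] with continuous partial derivative ∂ₓΨ on [−b,b] × [−1,1], satisfying Ψ(b,μ) = 0 for all μ ∈ [−1,0] and Ψ(−b,μ) = 0 for all μ ∈ [0,1]. Let Σ_t : ℝ → ℝ be continuous on [−b,b] with Σ_t(x) ≥ σ_* for all x ∈ [−b,b], and let Σ_s be a constant with 0 ≤ Σ_s < σ_*. Define the full transport residual R(x,μ) = μ ∂ₓΨ(x,μ) + Σ_t(x)Ψ(x,μ) − (Σ_s/2) ∫_{−1}^{1} Ψ(x,μ') dμ'. Then (∫_{−1}^{1} ∫_{−b}^{b} Ψ(x,μ)² dx dμ)^{1/2} ≤ (σ_* − Σ_s)⁻¹ (∫_{−1}^{1} ∫_{−b}^{b} R(x,μ)² dx dμ)^{1/2}. -/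

import Mathlib

open Set MeasureTheory

lemma integral_mul_sq_le' {α : Type*} [MeasurableSpace α] (μ : MeasureTheory.Measure α)
    (f g : α → ℝ) (hf2 : Integrable (fun x => f x ^ 2) μ)
    (hg2 : Integrable (fun x => g x ^ 2) μ)
    (hfg : Integrable (fun x => f x * g x) μ) :
    (∫ x, f x * g x ∂μ) ^ 2 ≤ (∫ x, f x ^ 2 ∂μ) * ∫ x, g x ^ 2 ∂μ := by
  set A := ∫ x, f x ^ 2 ∂μ with hA
  set B := ∫ x, f x * g x ∂μ with hB
  set C := ∫ x, g x ^ 2 ∂μ with hC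
  have key : ∀ t : ℝ, 0 ≤ A * (t * t) + (-2 * B) * t + C := by
    intro t
    have h0 : 0 ≤ ∫ x, (t * f x - g x) ^ 2 ∂μ := integral_nonneg fun x => sq_nonneg _
    have hexp : ∫ x, (t * f x - g x) ^ 2 ∂μ = A * (t * t) + (-2 * B) * t + C := by
      have hfun : (fun x => (t * f x - g x) ^ 2)
          = fun x => (t * t) * f x ^ 2 + ((-2 * t) * (f x * g x) + g x ^ 2) := by
        funext x; ring
      have i1 : Integrable (fun x => (t * t) * f x ^ 2) μ := hf2.const_mul _
      have i2 : Integrable (fun x => (-2 * t) * (f x * g x)) μ := hfg.const_mul _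
      have i3 : Integrable (fun x => (-2 * t) * (f x * g x) + g x ^ 2) μ := i2.add hg2
      rw [hfun, integral_add i1 i3, integral_add i2 hg2, integral_const_mul, integral_const_mul]
      ring
    linarith [hexp ▸ h0]
  have hd := discrim_le_zero key
  rw [discrim] at hd
  nlinarith [hd]

theorem full_transport_L2_residual_bound
    (b : ℝ) (hb : 0 < b) (Ψ Ψx : ℝ → ℝ → ℝ) (sigmaT : ℝ → ℝ) (σstar sigmaS : ℝ)
    (hΨ : ContinuousOn (fun p : ℝ × ℝ => Ψ p.1 p.2) (Icc (-b) b ×ˢ Icc (-1) 1))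
    (hΨx : ContinuousOn (fun p : ℝ × ℝ => Ψx p.1 p.2) (Icc (-b) b ×ˢ Icc (-1) 1))
    (hderiv : ∀ μ ∈ Icc (-1 : ℝ) 1, ∀ x ∈ Icc (-b) b,
      HasDerivWithinAt (fun t => Ψ t μ) (Ψx x μ) (Icc (-b) b) x)
    (hsigmaT : ContinuousOn sigmaT (Icc (-b) b))
    (hlow : ∀ x ∈ Icc (-b) b, σstar ≤ sigmaT x)
    (hsigmaS : 0 ≤ sigmaS) (hsmall : sigmaS < σstar)
    (hin₁ : ∀ μ ∈ Icc (-1 : ℝ) 0, Ψ b μ = 0)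
    (hin₂ : ∀ μ ∈ Icc (0 : ℝ) 1, Ψ (-b) μ = 0) :
    Real.sqrt (∫ μ in (-1 : ℝ)..1, ∫ x in (-b)..b, (Ψ x μ) ^ 2)
      ≤ (σstar - sigmaS)⁻¹ *
        Real.sqrt (∫ μ in (-1 : ℝ)..1, ∫ x in (-b)..b,
          (μ * Ψx x μ + sigmaT x * Ψ x μ
            - (sigmaS / 2) * ∫ μ' in (-1 : ℝ)..1, Ψ x μ') ^ 2) := by
  have hb1 : (-1 : ℝ) ≤ 1 := by norm_num
  have hble : (-b : ℝ) ≤ b := by linarith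
  -- slice continuity
  have contΨ : ∀ m ∈ Icc (-1 : ℝ) 1, ContinuousOn (fun x => Ψ x m) (Icc (-b) b) := fun m hm =>
    hΨ.comp (Continuous.continuousOn (continuous_id.prodMk continuous_const))
      fun x hx => ⟨hx, hm⟩
  have contΨx : ∀ m ∈ Icc (-1 : ℝ) 1, ContinuousOn (fun x => Ψx x m) (Icc (-b) b) := fun m hm =>
    hΨx.comp (Continuous.continuousOn (continuous_id.prodMk continuous_const))
      fun x hx => ⟨hx, hm⟩
  have contsliceμ : ∀ x ∈ Icc (-b) b, ContinuousOn (fun m => Ψ x m) (Icc (-1 : ℝ) 1) := fun x hx =>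
    hΨ.comp (Continuous.continuousOn (continuous_const.prodMk continuous_id))
      fun m hm => ⟨hx, hm⟩
  -- φ : the scalar flux
  have hφeq : ∀ x : ℝ, (∫ m in (-1 : ℝ)..1, Ψ x m) = ∫ m in Icc (-1 : ℝ) 1, Ψ x m := fun x => by
    rw [intervalIntegral.integral_of_le hb1, MeasureTheory.integral_Icc_eq_integral_Ioc]
  obtain ⟨CB, hCB⟩ := (isCompact_Icc.prod isCompact_Icc).exists_bound_of_continuousOn hΨ
  have φcont : ContinuousOn (fun x => ∫ m in (-1 : ℝ)..1, Ψ x m) (Icc (-b) b) := by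
    have h1 : ContinuousOn (fun x => ∫ m in Icc (-1 : ℝ) 1, Ψ x m) (Icc (-b) b) := by
      apply MeasureTheory.continuousOn_of_dominated (bound := fun _ => CB)
      · intro x hx
        exact (contsliceμ x hx).aestronglyMeasurable measurableSet_Icc
      · intro x hx
        filter_upwards [MeasureTheory.ae_restrict_mem measurableSet_Icc] with m hm
        exact hCB (x, m) ⟨hx, hm⟩
      · exact MeasureTheory.integrable_const _
      · filter_upwards [MeasureTheory.ae_restrict_mem measurableSet_Icc] with m hm
        exact hΨ.comp (Continuous.continuousOn (continuous_id.prodMk continuous_const))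
          fun x hx => ⟨hx, hm⟩
    exact h1.congr fun x _ => hφeq x
  -- the product measure on (μ, x)
  set P : Measure (ℝ × ℝ) :=
    (volume.restrict (Icc (-1 : ℝ) 1)).prod (volume.restrict (Icc (-b) b)) with hPdef
  have hPrect : P = (volume : Measure (ℝ × ℝ)).restrict (Icc (-1 : ℝ) 1 ×ˢ Icc (-b) b) := by
    rw [hPdef, Measure.prod_restrict, ← Measure.volume_eq_prod]
  have intP : ∀ f : ℝ → ℝ → ℝ,
      ContinuousOn (fun p : ℝ × ℝ => f p.1 p.2) (Icc (-b) b ×ˢ Icc (-1 : ℝ) 1) →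
      Integrable (fun p : ℝ × ℝ => f p.2 p.1) P := by
    intro f hf
    rw [hPrect]
    exact ContinuousOn.integrableOn_compact (isCompact_Icc.prod isCompact_Icc)
      (hf.comp continuous_swap.continuousOn fun p hp => ⟨hp.2, hp.1⟩)
  have haemem : ∀ᵐ p ∂P, p ∈ Icc (-1 : ℝ) 1 ×ˢ Icc (-b) b := by
    rw [hPrect]; exact MeasureTheory.ae_restrict_mem (measurableSet_Icc.prod measurableSet_Icc)
  -- joint continuity of the pieces
  have cμ : ContinuousOn (fun p : ℝ × ℝ => p.2) (Icc (-b) b ×ˢ Icc (-1 : ℝ) 1) :=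
    continuous_snd.continuousOn
  have cσ : ContinuousOn (fun p : ℝ × ℝ => sigmaT p.1) (Icc (-b) b ×ˢ Icc (-1 : ℝ) 1) :=
    hsigmaT.comp continuous_fst.continuousOn fun p hp => hp.1
  have cφ : ContinuousOn (fun p : ℝ × ℝ => ∫ m' in (-1 : ℝ)..1, Ψ p.1 m')
      (Icc (-b) b ×ˢ Icc (-1 : ℝ) 1) := φcont.comp continuous_fst.continuousOn fun p hp => hp.1
  have cR : ContinuousOn (fun p : ℝ × ℝ =>
      p.2 * Ψx p.1 p.2 + sigmaT p.1 * Ψ p.1 p.2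
        - sigmaS / 2 * ∫ m' in (-1 : ℝ)..1, Ψ p.1 m') (Icc (-b) b ×ˢ Icc (-1 : ℝ) 1) :=
    ((cμ.mul hΨx).add (cσ.mul hΨ)).sub (continuousOn_const.mul cφ)
  -- integrability of all the integrands
  have iΨ2 : Integrable (fun p : ℝ × ℝ => Ψ p.2 p.1 ^ 2) P :=
    intP (fun x m => Ψ x m ^ 2) (hΨ.pow 2)
  have iT1 : Integrable (fun p : ℝ × ℝ => p.1 * (Ψ p.2 p.1 * Ψx p.2 p.1)) P :=
    intP (fun x m => m * (Ψ x m * Ψx x m)) (cμ.mul (hΨ.mul hΨx))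
  have iT2 : Integrable (fun p : ℝ × ℝ => sigmaT p.2 * Ψ p.2 p.1 ^ 2) P :=
    intP (fun x m => sigmaT x * Ψ x m ^ 2) (cσ.mul (hΨ.pow 2))
  have iT3 : Integrable (fun p : ℝ × ℝ => (∫ m' in (-1 : ℝ)..1, Ψ p.2 m') * Ψ p.2 p.1) P :=
    intP (fun x m => (∫ m' in (-1 : ℝ)..1, Ψ x m') * Ψ x m) (cφ.mul hΨ)
  have iR2 : Integrable (fun p : ℝ × ℝ =>
      (p.1 * Ψx p.2 p.1 + sigmaT p.2 * Ψ p.2 p.1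
        - sigmaS / 2 * ∫ m' in (-1 : ℝ)..1, Ψ p.2 m') ^ 2) P :=
    intP (fun x m => (m * Ψx x m + sigmaT x * Ψ x m
        - sigmaS / 2 * ∫ m' in (-1 : ℝ)..1, Ψ x m') ^ 2) (cR.pow 2)
  have iRΨ : Integrable (fun p : ℝ × ℝ =>
      (p.1 * Ψx p.2 p.1 + sigmaT p.2 * Ψ p.2 p.1
        - sigmaS / 2 * ∫ m' in (-1 : ℝ)..1, Ψ p.2 m') * Ψ p.2 p.1) P :=
    intP (fun x m => (m * Ψx x m + sigmaT x * Ψ x m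
        - sigmaS / 2 * ∫ m' in (-1 : ℝ)..1, Ψ x m') * Ψ x m) (cR.mul hΨ)
  -- identification of iterated interval integrals with `P`-integrals
  have iterEq : ∀ f : ℝ → ℝ → ℝ, Integrable (fun p : ℝ × ℝ => f p.2 p.1) P →
      (∫ m in (-1 : ℝ)..1, ∫ x in (-b)..b, f x m) = ∫ p, f p.2 p.1 ∂P := by
    intro f hf
    have h0 : (∫ p, f p.2 p.1 ∂P)
        = ∫ m in Icc (-1 : ℝ) 1, ∫ x in Icc (-b) b, f x m :=
      MeasureTheory.integral_prod _ hf
    rw [h0, intervalIntegral.integral_of_le hb1, ← MeasureTheory.integral_Icc_eq_integral_Ioc]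
    refine MeasureTheory.integral_congr_ae (Filter.Eventually.of_forall fun m => ?_)
    show (∫ x in (-b)..b, f x m) = ∫ x in Icc (-b) b, f x m
    rw [intervalIntegral.integral_of_le hble, ← MeasureTheory.integral_Icc_eq_integral_Ioc]
  -- FTC in the x variable, for fixed m
  have inner1 : ∀ m ∈ Icc (-1 : ℝ) 1,
      (∫ x in Icc (-b) b, m * (Ψ x m * Ψx x m))
        = m * ((Ψ b m) ^ 2 / 2 - (Ψ (-b) m) ^ 2 / 2) := by
    intro m hm
    have hcx := contΨ m hm
    have hcdx := contΨx m hm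
    have hint : IntervalIntegrable (fun x => Ψ x m * Ψx x m) volume (-b) b := by
      apply ContinuousOn.intervalIntegrable
      rw [uIcc_of_le hble]; exact hcx.mul hcdx
    have hd : ∀ x ∈ Ioo (-b) b,
        HasDerivWithinAt (fun t => (Ψ t m) ^ 2 / 2) (Ψ x m * Ψx x m) (Ioi x) x := by
      intro x hx
      have h1 : HasDerivAt (fun t => Ψ t m) (Ψx x m) x :=
        (hderiv m hm x (Ioo_subset_Icc_self hx)).hasDerivAt (Icc_mem_nhds hx.1 hx.2)
      have h2 : HasDerivAt (fun t => (Ψ t m) ^ 2 / 2) (Ψ x m * Ψx x m) x := by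
        have h3 := (h1.fun_pow 2).div_const 2
        exact h3.congr_deriv (by push_cast; ring)
      exact h2.hasDerivWithinAt
    have hFTC := intervalIntegral.integral_eq_sub_of_hasDeriv_right_of_le hble
      ((hcx.pow 2).div_const 2) hd hint
    have hIcc : (∫ x in Icc (-b) b, Ψ x m * Ψx x m)
        = (Ψ b m) ^ 2 / 2 - (Ψ (-b) m) ^ 2 / 2 := by
      rw [MeasureTheory.integral_Icc_eq_integral_Ioc, ← intervalIntegral.integral_of_le hble]
      simpa using hFTC
    rw [MeasureTheory.integral_const_mul, hIcc]
  -- T1 ≥ 0 : boundary term has the good sign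
  have hT1 : 0 ≤ ∫ p, p.1 * (Ψ p.2 p.1 * Ψx p.2 p.1) ∂P := by
    have h0 : (∫ p, p.1 * (Ψ p.2 p.1 * Ψx p.2 p.1) ∂P)
        = ∫ m in Icc (-1 : ℝ) 1, ∫ x in Icc (-b) b, m * (Ψ x m * Ψx x m) :=
      MeasureTheory.integral_prod _ iT1
    rw [h0]
    refine MeasureTheory.setIntegral_nonneg measurableSet_Icc fun m hm => ?_
    have h1 : (0 : ℝ) ≤ m * ((Ψ b m) ^ 2 / 2 - (Ψ (-b) m) ^ 2 / 2) := by
      rcases le_or_gt m 0 with h | h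
      · have hz : Ψ b m = 0 := hin₁ m ⟨hm.1, h⟩
        rw [hz]
        have := mul_nonneg (neg_nonneg.2 h) (sq_nonneg (Ψ (-b) m))
        nlinarith
      · have hz : Ψ (-b) m = 0 := hin₂ m ⟨h.le, hm.2⟩
        rw [hz]
        have := mul_nonneg h.le (sq_nonneg (Ψ b m))
        nlinarith
    rw [inner1 m hm]
    exact h1
  -- T2 ≥ σ* N2
  have hT2 : σstar * (∫ p, Ψ p.2 p.1 ^ 2 ∂P) ≤ ∫ p, sigmaT p.2 * Ψ p.2 p.1 ^ 2 ∂P := by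
    rw [← MeasureTheory.integral_const_mul]
    refine MeasureTheory.integral_mono_ae (iΨ2.const_mul _) iT2 ?_
    filter_upwards [haemem] with p hp
    exact mul_le_mul_of_nonneg_right (hlow p.2 hp.2) (sq_nonneg _)
  -- scattering term
  have hT3id : (∫ p, (∫ m' in (-1 : ℝ)..1, Ψ p.2 m') * Ψ p.2 p.1 ∂P)
      = ∫ x in Icc (-b) b,
          (∫ m' in (-1 : ℝ)..1, Ψ x m') * (∫ m' in (-1 : ℝ)..1, Ψ x m') := by
    have h0 : (∫ p, (∫ m' in (-1 : ℝ)..1, Ψ p.2 m') * Ψ p.2 p.1 ∂P)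
        = ∫ x in Icc (-b) b, ∫ m in Icc (-1 : ℝ) 1, (∫ m' in (-1 : ℝ)..1, Ψ x m') * Ψ x m :=
      MeasureTheory.integral_prod_symm _ iT3
    rw [h0]
    refine MeasureTheory.integral_congr_ae (Filter.Eventually.of_forall fun x => ?_)
    show (∫ m in Icc (-1 : ℝ) 1, (∫ m' in (-1 : ℝ)..1, Ψ x m') * Ψ x m)
        = (∫ m' in (-1 : ℝ)..1, Ψ x m') * ∫ m' in (-1 : ℝ)..1, Ψ x m'
    rw [MeasureTheory.integral_const_mul, ← hφeq x]
  have hφsq : ∀ x ∈ Icc (-b) b,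
      (∫ m' in (-1 : ℝ)..1, Ψ x m') * (∫ m' in (-1 : ℝ)..1, Ψ x m')
        ≤ 2 * ∫ m in Icc (-1 : ℝ) 1, Ψ x m ^ 2 := by
    intro x hx
    have hcont := contsliceμ x hx
    have hint : Integrable (fun m => Ψ x m) (volume.restrict (Icc (-1 : ℝ) 1)) :=
      hcont.integrableOn_compact isCompact_Icc
    have hint2 : Integrable (fun m => Ψ x m ^ 2) (volume.restrict (Icc (-1 : ℝ) 1)) :=
      (hcont.pow 2).integrableOn_compact isCompact_Icc
    have hCS1 := integral_mul_sq_le' (volume.restrict (Icc (-1 : ℝ) 1))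
      (fun m => Ψ x m) (fun _ => (1 : ℝ)) hint2 (by simpa using
        (MeasureTheory.integrable_const (1 : ℝ) :
          Integrable (fun _ : ℝ => (1 : ℝ)) (volume.restrict (Icc (-1 : ℝ) 1))))
      (by simpa using hint)
    simp only [mul_one, one_pow] at hCS1
    have h1 : (∫ _m in Icc (-1 : ℝ) 1, (1 : ℝ)) = 2 := by
      simp [Real.volume_Icc]
      norm_num
    rw [h1] at hCS1
    rw [hφeq x]
    nlinarith [hCS1]
  have hT3 : (∫ p, (∫ m' in (-1 : ℝ)..1, Ψ p.2 m') * Ψ p.2 p.1 ∂P)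
      ≤ 2 * ∫ p, Ψ p.2 p.1 ^ 2 ∂P := by
    rw [hT3id]
    have hN2symm : (∫ p, Ψ p.2 p.1 ^ 2 ∂P)
        = ∫ x in Icc (-b) b, ∫ m in Icc (-1 : ℝ) 1, Ψ x m ^ 2 :=
      MeasureTheory.integral_prod_symm _ iΨ2
    rw [hN2symm, ← MeasureTheory.integral_const_mul]
    refine MeasureTheory.integral_mono_ae ?_ ?_ ?_
    · exact (φcont.mul φcont).integrableOn_compact isCompact_Icc
    · exact iΨ2.integral_prod_right.const_mul 2
    · filter_upwards [MeasureTheory.ae_restrict_mem measurableSet_Icc] with x hx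
        using hφsq x hx
  -- decomposition of the residual pairing
  have i23 : Integrable (fun p : ℝ × ℝ => sigmaS / 2 * ((∫ m' in (-1 : ℝ)..1, Ψ p.2 m') * Ψ p.2 p.1)) P :=
    iT3.const_mul _
  have i2m3 : Integrable (fun p : ℝ × ℝ => sigmaT p.2 * Ψ p.2 p.1 ^ 2
      - sigmaS / 2 * ((∫ m' in (-1 : ℝ)..1, Ψ p.2 m') * Ψ p.2 p.1)) P := iT2.sub i23
  have hsplit : (fun p : ℝ × ℝ =>
      (p.1 * Ψx p.2 p.1 + sigmaT p.2 * Ψ p.2 p.1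
        - sigmaS / 2 * ∫ m' in (-1 : ℝ)..1, Ψ p.2 m') * Ψ p.2 p.1)
      = fun p : ℝ × ℝ => p.1 * (Ψ p.2 p.1 * Ψx p.2 p.1)
        + (sigmaT p.2 * Ψ p.2 p.1 ^ 2
          - sigmaS / 2 * ((∫ m' in (-1 : ℝ)..1, Ψ p.2 m') * Ψ p.2 p.1)) := by
    funext p; ring
  have hIP : (∫ p, (p.1 * Ψx p.2 p.1 + sigmaT p.2 * Ψ p.2 p.1
        - sigmaS / 2 * ∫ m' in (-1 : ℝ)..1, Ψ p.2 m') * Ψ p.2 p.1 ∂P)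
      = (∫ p, p.1 * (Ψ p.2 p.1 * Ψx p.2 p.1) ∂P)
        + ((∫ p, sigmaT p.2 * Ψ p.2 p.1 ^ 2 ∂P)
          - sigmaS / 2 * ∫ p, (∫ m' in (-1 : ℝ)..1, Ψ p.2 m') * Ψ p.2 p.1 ∂P) := by
    rw [hsplit, MeasureTheory.integral_add iT1 i2m3, MeasureTheory.integral_sub iT2 i23,
      MeasureTheory.integral_const_mul]
  -- put everything together
  have EL : (∫ m in (-1 : ℝ)..1, ∫ x in (-b)..b, (Ψ x m) ^ 2) = ∫ p, Ψ p.2 p.1 ^ 2 ∂P :=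
    iterEq (fun x m => Ψ x m ^ 2) iΨ2
  have ER : (∫ m in (-1 : ℝ)..1, ∫ x in (-b)..b,
      (m * Ψx x m + sigmaT x * Ψ x m - sigmaS / 2 * ∫ m' in (-1 : ℝ)..1, Ψ x m') ^ 2)
      = ∫ p, (p.1 * Ψx p.2 p.1 + sigmaT p.2 * Ψ p.2 p.1
        - sigmaS / 2 * ∫ m' in (-1 : ℝ)..1, Ψ p.2 m') ^ 2 ∂P :=
    iterEq (fun x m => (m * Ψx x m + sigmaT x * Ψ x m
      - sigmaS / 2 * ∫ m' in (-1 : ℝ)..1, Ψ x m') ^ 2) iR2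
  rw [EL, ER]
  set N2 : ℝ := ∫ p, Ψ p.2 p.1 ^ 2 ∂P with hN2
  set RR2 : ℝ := ∫ p, (p.1 * Ψx p.2 p.1 + sigmaT p.2 * Ψ p.2 p.1
      - sigmaS / 2 * ∫ m' in (-1 : ℝ)..1, Ψ p.2 m') ^ 2 ∂P with hRR2
  set IP : ℝ := ∫ p, (p.1 * Ψx p.2 p.1 + sigmaT p.2 * Ψ p.2 p.1
      - sigmaS / 2 * ∫ m' in (-1 : ℝ)..1, Ψ p.2 m') * Ψ p.2 p.1 ∂P with hIPdef
  have hN2nn : 0 ≤ N2 := integral_nonneg fun p => sq_nonneg _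
  have hRR2nn : 0 ≤ RR2 := integral_nonneg fun p => sq_nonneg _
  have hc : 0 < σstar - sigmaS := by linarith
  have hLB : (σstar - sigmaS) * N2 ≤ IP := by
    have h5 : sigmaS / 2 * (∫ p, (∫ m' in (-1 : ℝ)..1, Ψ p.2 m') * Ψ p.2 p.1 ∂P)
        ≤ sigmaS / 2 * (2 * N2) :=
      mul_le_mul_of_nonneg_left hT3 (by linarith)
    rw [hIP]
    nlinarith [hT1, hT2, h5]
  have hCS : IP ^ 2 ≤ RR2 * N2 := integral_mul_sq_le' P
    (fun p : ℝ × ℝ => p.1 * Ψx p.2 p.1 + sigmaT p.2 * Ψ p.2 p.1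
      - sigmaS / 2 * ∫ m' in (-1 : ℝ)..1, Ψ p.2 m')
    (fun p : ℝ × ℝ => Ψ p.2 p.1) iR2 iΨ2 iRΨ
  clear_value N2 RR2 IP
  rcases eq_or_lt_of_le hN2nn with h0 | hpos
  · rw [← h0, Real.sqrt_zero]
    exact mul_nonneg (inv_nonneg.2 hc.le) (Real.sqrt_nonneg _)
  · have h1 : ((σstar - sigmaS) * N2) ^ 2 ≤ RR2 * N2 := by
      have h2 : ((σstar - sigmaS) * N2) ^ 2 ≤ IP ^ 2 := by
        nlinarith [hLB, mul_nonneg hc.le hN2nn]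
      exact h2.trans hCS
    have h2 : (σstar - sigmaS) ^ 2 * N2 ≤ RR2 :=
      le_of_mul_le_mul_right (by
        rw [show (σstar - sigmaS) ^ 2 * N2 * N2 = ((σstar - sigmaS) * N2) ^ 2 from by ring]
        exact h1) hpos
    have h3 : Real.sqrt ((σstar - sigmaS) ^ 2 * N2) ≤ Real.sqrt RR2 := Real.sqrt_le_sqrt h2
    rw [Real.sqrt_mul (sq_nonneg _), Real.sqrt_sq hc.le] at h3
    rw [inv_mul_eq_div, le_div_iff₀ hc]
    linarith [h3]
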